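/- The minimal-norm collocation solution u_{∥N} satisfies R u_{∥N} = P_{V_N} f, where P_{V_N} is the orthogonal projection in the RKHS (Im R, ⟨·,·⟩_{Im R}) onto the finite-dimensional subspace V_N = span{Q(·,θ_k) e_i : i = 1,…,n, k = 1,…,N}. -/

import Mathlib

open MeasureTheory Matrix Set NormedSpace Filter
open scoped RealInnerProductSpace
noncomputable section

/-- Lebesgue measure restricted to `[0,T]`. -/
def muT (T : ℝ) : Measure ℝ := MeasureTheory.volume.restrict (Set.Icc (0:ℝ) T)

/-- The space `L²([0,T], ℝᵐ)`. -/
abbrev L2 (m : ℕ) (T : ℝ) := MeasureTheory.Lp (EuclideanSpace ℝ (Fin m)) 2 (muT T)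

/-- Single-parameter reachability map `u ↦ ∫₀ᵀ e^{A(T-s)} B u(s) ds`. -/
def RopK {n m : ℕ} (T : ℝ) (A : Matrix (Fin n) (Fin n) ℝ) (B : Matrix (Fin n) (Fin m) ℝ)
    (u : L2 m T) : EuclideanSpace ℝ (Fin n) :=
  ∫ s in Set.Icc (0:ℝ) T, WithLp.toLp 2 (((exp ((T - s) • A)) * B).mulVec (u s))

/-- The adjoint kernel `s ↦ Bᵀ e^{Aᵀ(T-s)} v`. -/
def RadjK {n m : ℕ} (T : ℝ) (A : Matrix (Fin n) (Fin n) ℝ) (B : Matrix (Fin n) (Fin m) ℝ)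
    (v : EuclideanSpace ℝ (Fin n)) (s : ℝ) : EuclideanSpace ℝ (Fin m) :=
  WithLp.toLp 2 ((Bᵀ * exp ((T - s) • Aᵀ)).mulVec v)

/-- Parametrized reachability operator `(Ru)(θ)`. -/
def RopFam {n m : ℕ} (T : ℝ) (A : ℝ → Matrix (Fin n) (Fin n) ℝ)
    (B : ℝ → Matrix (Fin n) (Fin m) ℝ) (u : L2 m T) (θ : ℝ) : EuclideanSpace ℝ (Fin n) :=
  RopK T (A θ) (B θ) u

/-- The reproducing kernel `Q(θ, θ')`. -/
def Qfun {n m : ℕ} (T : ℝ) (A : ℝ → Matrix (Fin n) (Fin n) ℝ)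
    (B : ℝ → Matrix (Fin n) (Fin m) ℝ) (θ θ' : ℝ) : Matrix (Fin n) (Fin n) ℝ :=
  Matrix.of fun i j => ∫ s in Set.Icc (0:ℝ) T,
    (exp ((T - s) • A θ) * B θ * (B θ')ᵀ * exp ((T - s) • (A θ')ᵀ)) i j

/-- Controllability Gramian of `(A,B)` on `[0,T]`. -/
def Gram {n m : ℕ} (T : ℝ) (A : Matrix (Fin n) (Fin n) ℝ) (B : Matrix (Fin n) (Fin m) ℝ) :
    Matrix (Fin n) (Fin n) ℝ :=
  Matrix.of fun i j => ∫ s in Set.Icc (0:ℝ) T,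
    ((exp ((T - s) • A)) * B * Bᵀ * (exp ((T - s) • Aᵀ))) i j

namespace Colloc


instance (T : ℝ) : IsFiniteMeasure (muT T) := by unfold muT; infer_instance

def matCLM {n m : ℕ} (M : Matrix (Fin n) (Fin m) ℝ) :
    EuclideanSpace ℝ (Fin m) →L[ℝ] EuclideanSpace ℝ (Fin n) :=
  LinearMap.toContinuousLinearMap (Matrix.toEuclideanLin M)

lemma matCLM_apply {n m : ℕ} (M : Matrix (Fin n) (Fin m) ℝ) (x : EuclideanSpace ℝ (Fin m)) :
    matCLM M x = WithLp.toLp 2 (M.mulVec x) := rfl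

def matCLMₗ (n m : ℕ) :
    Matrix (Fin n) (Fin m) ℝ →ₗ[ℝ] (EuclideanSpace ℝ (Fin m) →L[ℝ] EuclideanSpace ℝ (Fin n)) where
  toFun := matCLM
  map_add' M₁ M₂ := by ext x; simp [matCLM]
  map_smul' c M := by ext x; simp [matCLM]

lemma contMatCLM {n m : ℕ} {K : ℝ → Matrix (Fin n) (Fin m) ℝ} (hK : Continuous K) :
    Continuous fun s => matCLM (K s) :=
  ((matCLMₗ n m).continuous_of_finiteDimensional).comp hK

section NormInst
attribute [local instance] Matrix.linftyOpNormedAddCommGroup Matrix.linftyOpNormedSpace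
  Matrix.linftyOpNormedRing Matrix.linftyOpNormedAlgebra

lemma contK {n m : ℕ} (T : ℝ) (A : Matrix (Fin n) (Fin n) ℝ) (B : Matrix (Fin n) (Fin m) ℝ) :
    Continuous fun s : ℝ => exp ((T - s) • A) * B := by
  have h : Continuous fun s : ℝ => exp ((T - s) • A) :=
    NormedSpace.exp_continuous.comp ((continuous_const.sub continuous_id).smul continuous_const)
  exact h.matrix_mul continuous_const
end NormInst

lemma integrable_mulVec {n m : ℕ} {T : ℝ} {K : ℝ → Matrix (Fin n) (Fin m) ℝ} (hK : Continuous K)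
    (u : L2 m T) :
    Integrable (fun s => matCLM (K s) (u s)) (muT T) := by
  have hu : Integrable (fun s => (u s : EuclideanSpace ℝ (Fin m))) (muT T) :=
    (MeasureTheory.Lp.memLp u).integrable (by norm_num)
  obtain ⟨C, hC⟩ : ∃ C, ∀ s ∈ Icc (0:ℝ) T, ‖matCLM (K s)‖ ≤ C :=
    isCompact_Icc.exists_bound_of_continuousOn (contMatCLM hK).continuousOn
  refine Integrable.mono' (hu.norm.const_mul C) ?_ ?_
  · exact isBoundedBilinearMap_apply.continuous.comp_aestronglyMeasurable
      (((contMatCLM hK).aestronglyMeasurable).prodMk hu.1)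
  · have : ∀ᵐ s ∂(muT T), s ∈ Icc (0:ℝ) T := ae_restrict_mem measurableSet_Icc
    filter_upwards [this] with s hs
    exact le_trans ((matCLM (K s)).le_opNorm (u s))
      (mul_le_mul_of_nonneg_right (hC s hs) (norm_nonneg _))

lemma RopK_eq {n m : ℕ} (T : ℝ) (A : Matrix (Fin n) (Fin n) ℝ) (B : Matrix (Fin n) (Fin m) ℝ)
    (u : L2 m T) :
    RopK T A B u = ∫ s, matCLM (exp ((T - s) • A) * B) (u s) ∂(muT T) := rfl

lemma integrable_RopK {n m : ℕ} (T : ℝ) (A : Matrix (Fin n) (Fin n) ℝ)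
    (B : Matrix (Fin n) (Fin m) ℝ) (u : L2 m T) :
    Integrable (fun s => matCLM (exp ((T - s) • A) * B) (u s)) (muT T) :=
  integrable_mulVec (contK T A B) u

lemma integral_coord {n : ℕ} {T : ℝ} {f : ℝ → EuclideanSpace ℝ (Fin n)}
    (hf : Integrable f (muT T)) (i : Fin n) :
    (∫ s, f s ∂(muT T)) i = ∫ s, f s i ∂(muT T) :=
  ((EuclideanSpace.proj i).integral_comp_comm hf).symm

def RopL {n m : ℕ} (T : ℝ) (A : Matrix (Fin n) (Fin n) ℝ) (B : Matrix (Fin n) (Fin m) ℝ) :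
    L2 m T →ₗ[ℝ] EuclideanSpace ℝ (Fin n) where
  toFun := RopK T A B
  map_add' u v := by
    rw [RopK_eq, RopK_eq, RopK_eq, ← integral_add (integrable_RopK T A B u)
      (integrable_RopK T A B v)]
    apply integral_congr_ae
    filter_upwards [Lp.coeFn_add u v] with s hs
    rw [hs]
    simp
  map_smul' c u := by
    show RopK T A B (c • u) = c • RopK T A B u
    rw [RopK_eq, RopK_eq, ← integral_smul]
    apply integral_congr_ae
    filter_upwards [Lp.coeFn_smul c u] with s hs
    rw [hs]
    simp

lemma RopL_apply {n m : ℕ} (T : ℝ) (A : Matrix (Fin n) (Fin n) ℝ) (B : Matrix (Fin n) (Fin m) ℝ)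
    (u : L2 m T) : RopL T A B u = RopK T A B u := rfl

lemma inner_RadjK {n m : ℕ} (T : ℝ) (A : Matrix (Fin n) (Fin n) ℝ) (B : Matrix (Fin n) (Fin m) ℝ)
    (x : EuclideanSpace ℝ (Fin m)) (i : Fin n) (s : ℝ) :
    ⟪x, RadjK T A B (EuclideanSpace.single i 1) s⟫ = matCLM (exp ((T - s) • A) * B) x i := by
  have hM : Bᵀ * exp ((T - s) • Aᵀ) = (exp ((T - s) • A) * B)ᵀ := by
    rw [Matrix.transpose_mul, ← Matrix.exp_transpose, Matrix.transpose_smul]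
  rw [matCLM_apply]
  show ⟪x, WithLp.toLp 2 ((Bᵀ * exp ((T - s) • Aᵀ)).mulVec (EuclideanSpace.single i 1))⟫ = _
  rw [hM, EuclideanSpace.inner_eq_star_dotProduct]
  show dotProduct ((exp ((T - s) • A) * B)ᵀ.mulVec (EuclideanSpace.single i 1))
    (star (x : Fin m → ℝ)) = _
  rw [star_trivial, dotProduct_comm, dotProduct_mulVec, Matrix.vecMul_transpose]
  show dotProduct _ (Pi.single i 1) = _
  rw [dotProduct_single, mul_one]

lemma inner_L2 {n m : ℕ} {T : ℝ} (A : Matrix (Fin n) (Fin n) ℝ) (B : Matrix (Fin n) (Fin m) ℝ)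
    (u w : L2 m T) (i : Fin n)
    (hw : ∀ᵐ s ∂(muT T), w s = RadjK T A B (EuclideanSpace.single i 1) s) :
    ⟪u, w⟫ = RopK T A B u i := by
  rw [MeasureTheory.L2.inner_def]
  have h1 : ∫ s, ⟪u s, w s⟫ ∂(muT T)
      = ∫ s, matCLM (exp ((T - s) • A) * B) (u s) i ∂(muT T) := by
    apply integral_congr_ae
    filter_upwards [hw] with s hs
    rw [hs, inner_RadjK]
  rw [h1, ← integral_coord (integrable_RopK T A B u) i, ← RopK_eq]

lemma RopK_radj {n m : ℕ} {T : ℝ} (A : ℝ → Matrix (Fin n) (Fin n) ℝ)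
    (B : ℝ → Matrix (Fin n) (Fin m) ℝ) (θ θ' : ℝ) (w : L2 m T) (i : Fin n)
    (hw : ∀ᵐ s ∂(muT T), w s = RadjK T (A θ') (B θ') (EuclideanSpace.single i 1) s) :
    RopK T (A θ) (B θ) w = (Qfun T A B θ θ').mulVec (EuclideanSpace.single i 1) := by
  funext j
  have hR : ((Qfun T A B θ θ').mulVec (EuclideanSpace.single i 1) : Fin n → ℝ) j
      = ∫ s, (exp ((T - s) • A θ) * B θ * (B θ')ᵀ * exp ((T - s) • (A θ')ᵀ)) j i
          ∂(muT T) := by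
    show ((Qfun T A B θ θ') *ᵥ Pi.single i 1) j = _
    rw [Matrix.mulVec_single_one]
    rfl
  rw [hR, RopK_eq, integral_coord (integrable_RopK T (A θ) (B θ) w) j]
  apply integral_congr_ae
  filter_upwards [hw] with s hs
  rw [hs]
  show ((exp ((T - s) • A θ) * B θ) *ᵥ
      (((B θ')ᵀ * exp ((T - s) • (A θ')ᵀ)) *ᵥ Pi.single i 1)) j = _
  rw [Matrix.mulVec_mulVec, Matrix.mulVec_single_one, Matrix.col_apply, ← Matrix.mul_assoc]

end Colloc

/-- the minimal-norm collocation solution `u_{∥N}` satisfies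
`R u_{∥N} = P_{V_N} f`: (a) `R u_{∥N}` lies in `V_N = span{Q(·,θ_k)eᵢ}` and
(b) `R u_{∥N} − f` is `Im R`-orthogonal to `V_N`, i.e. (via the isometry `R♯`)
`u_{∥N} − R♯f` is `L²`-orthogonal to each `u_{i,k} = R♯(Q(·,θ_k)eᵢ)`. -/
theorem collocation_solution_is_projection {n m N : ℕ} (T θm θp : ℝ) (hT : 0 < T)
    (hθ : θm ≤ θp)
    (A : ℝ → Matrix (Fin n) (Fin n) ℝ) (B : ℝ → Matrix (Fin n) (Fin m) ℝ)
    (hA : ∀ i j, Continuous fun θ => A θ i j) (hB : ∀ i j, Continuous fun θ => B θ i j)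
    (θs : Fin N → ℝ) (hθs : StrictMono θs) (hθsP : ∀ k, θs k ∈ Set.Icc θm θp)
    (uf : L2 m T)
    (hufmin : ∀ w : L2 m T,
      (∀ θ ∈ Set.Icc θm θp, RopFam T A B w θ = RopFam T A B uf θ) → ‖uf‖ ≤ ‖w‖)
    (upar : L2 m T)
    (hupar : ∀ k, RopFam T A B upar (θs k) = RopFam T A B uf (θs k))
    (huparmin : ∀ w : L2 m T,
      (∀ k, RopFam T A B w (θs k) = RopFam T A B uf (θs k)) → ‖upar‖ ≤ ‖w‖)
    (uik : Fin N → Fin n → L2 m T)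
    (huik : ∀ k i, ∀ᵐ s ∂(muT T),
      uik k i s = RadjK T (A (θs k)) (B (θs k)) (EuclideanSpace.single i 1) s) :
    (∃ c : Fin N × Fin n → ℝ, ∀ θ ∈ Set.Icc θm θp,
        RopFam T A B upar θ =
          ∑ p : Fin N × Fin n, c p • (Qfun T A B θ (θs p.1)).mulVec (EuclideanSpace.single p.2 1)) ∧
      ∀ k i, ⟪upar - uf, uik k i⟫ = 0 := by
  classical
  have hinner : ∀ (u : L2 m T) (k : Fin N) (i : Fin n),
      ⟪u, uik k i⟫ = RopK T (A (θs k)) (B (θs k)) u i :=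
    fun u k i => Colloc.inner_L2 (A (θs k)) (B (θs k)) u (uik k i) i (huik k i)
  have hb : ∀ k i, ⟪upar - uf, uik k i⟫ = 0 := by
    intro k i
    rw [hinner]
    have h4 : RopK T (A (θs k)) (B (θs k)) (upar - uf)
        = RopK T (A (θs k)) (B (θs k)) upar - RopK T (A (θs k)) (B (θs k)) uf :=
      map_sub (Colloc.RopL T (A (θs k)) (B (θs k))) upar uf
    have h5 : RopK T (A (θs k)) (B (θs k)) upar = RopK T (A (θs k)) (B (θs k)) uf := hupar k
    rw [h4, h5, sub_self]
    rfl
  refine ⟨?_, hb⟩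
  set U : Submodule ℝ (L2 m T) :=
    Submodule.span ℝ (Set.range fun p : Fin N × Fin n => uik p.1 p.2) with hU
  haveI : FiniteDimensional ℝ U := FiniteDimensional.span_of_finite ℝ (Set.finite_range _)
  set P : L2 m T := (U.orthogonalProjectionOnto upar : L2 m T) with hPdef
  have hvmem : upar - P ∈ Uᗮ := Submodule.sub_starProjection_mem_orthogonal (K := U) upar
  have huikU : ∀ k i, uik k i ∈ U := fun k i => Submodule.subset_span ⟨(k, i), rfl⟩
  have hvort : ∀ k i, ⟪upar - P, uik k i⟫ = 0 := fun k i => by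
    rw [real_inner_comm]
    exact hvmem (uik k i) (huikU k i)
  have hRv : ∀ k, RopK T (A (θs k)) (B (θs k)) (upar - P) = 0 := by
    intro k
    refine PiLp.ext fun i => ?_
    rw [← hinner (upar - P) k i, hvort k i]
    rfl
  have hPk : ∀ k, RopFam T A B P (θs k) = RopFam T A B uf (θs k) := by
    intro k
    have h2 := map_sub (Colloc.RopL T (A (θs k)) (B (θs k))) upar (upar - P)
    rw [sub_sub_cancel] at h2
    simp only [Colloc.RopL_apply] at h2
    show RopK T (A (θs k)) (B (θs k)) P = RopFam T A B uf (θs k)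
    rw [h2, hRv k, sub_zero]
    exact hupar k
  have hle : ‖upar‖ ≤ ‖P‖ := huparmin P hPk
  have hPUP : ⟪P, upar - P⟫ = 0 :=
    Submodule.inner_right_of_mem_orthogonal (U.orthogonalProjectionOnto upar).2 hvmem
  have hsq : ‖upar‖^2 = ‖P‖^2 + ‖upar - P‖^2 := by
    have hx : P + (upar - P) = upar := add_sub_cancel P upar
    calc ‖upar‖^2 = ‖P + (upar - P)‖^2 := by rw [hx]
    _ = ‖P‖^2 + 2*⟪P, upar - P⟫ + ‖upar - P‖^2 := norm_add_sq_real _ _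
    _ = ‖P‖^2 + ‖upar - P‖^2 := by rw [hPUP]; ring
  have hz : upar = P := by
    have h5 : ‖upar - P‖ = 0 := by
      nlinarith [norm_nonneg (upar - P), norm_nonneg P, norm_nonneg upar]
    rw [← sub_eq_zero]
    exact norm_eq_zero.mp h5
  have hmem : upar ∈ U := by
    rw [hz]
    exact (U.orthogonalProjectionOnto upar).2
  obtain ⟨c, hc⟩ := (Submodule.mem_span_range_iff_exists_fun ℝ).mp hmem
  refine ⟨c, fun θ _ => ?_⟩
  have hQ : ∀ p : Fin N × Fin n, RopK T (A θ) (B θ) (uik p.1 p.2)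
      = (Qfun T A B θ (θs p.1)).mulVec (EuclideanSpace.single p.2 1) :=
    fun p => Colloc.RopK_radj A B θ (θs p.1) (uik p.1 p.2) p.2 (huik p.1 p.2)
  have hmap : RopK T (A θ) (B θ) (∑ p : Fin N × Fin n, c p • uik p.1 p.2)
      = ∑ p : Fin N × Fin n, c p • RopK T (A θ) (B θ) (uik p.1 p.2) := by
    rw [← Colloc.RopL_apply, map_sum]
    exact Finset.sum_congr rfl fun p _ => by rw [_root_.map_smul, Colloc.RopL_apply]
  have h6 : RopFam T A B upar θ
      = RopK T (A θ) (B θ) (∑ p : Fin N × Fin n, c p • uik p.1 p.2) := by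
    rw [hc]; rfl
  rw [h6, hmap]
  rw [WithLp.ofLp_sum]
  exact Finset.sum_congr rfl fun p _ => by rw [WithLp.ofLp_smul, hQ p]
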